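/- Let d, H, K ∈ ℕ be positive and λ̃ > 0. For each h ∈ {1,…,H} and k ∈ {1,…,K}, let Λ_h^k be a real d×d positive definite matrix such that Λ_h^{k₂} − Λ_h^{k₁} is positive semidefinite whenever k₁ ≤ k₂, det(Λ_h^1) ≥ λ̃^d, and det(Λ_h^K) ≤ (λ̃ + K/d)^d. Suppose 1 = k_0 < k_1 < ⋯ < k_N ≤ K are episodes such that for every i ∈ {1,…,N} there exists h ∈ {1,…,H} with det(Λ_h^{k_i}) > 2·det(Λ_h^{k_{i-1}}). Then N ≤ (dH / log 2) · log(1 + K/(λ̃ d)). -/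

import Mathlib

open Matrix

lemma det_one_add_psd {d : ℕ} {D : Matrix (Fin d) (Fin d) ℝ} (hD : D.PosSemidef) :
    1 ≤ (1 + D).det := by
  have hH := hD.isHermitian
  have hspec := hH.spectral_theorem
  set U : Matrix (Fin d) (Fin d) ℝ := (hH.eigenvectorUnitary : Matrix (Fin d) (Fin d) ℝ) with hU
  have hUU : U * star U = 1 := by
    exact hH.eigenvectorUnitary.2.2
  have key : 1 + D = U * (1 + diagonal (RCLike.ofReal ∘ hH.eigenvalues)) * star U := by
    rw [mul_add, add_mul, mul_one, hUU]
    exact congrArg (1 + ·) hspec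
  have hdetU : U.det * (star U).det = 1 := by
    rw [← det_mul, hUU, det_one]
  have heq : (1 + D).det = ((1 : Matrix (Fin d) (Fin d) ℝ) + diagonal (RCLike.ofReal ∘ hH.eigenvalues)).det := by
    rw [key, det_mul, det_mul]
    rw [mul_comm, ← mul_assoc, mul_comm (star U).det, hdetU, one_mul]
  rw [heq, ← diagonal_one, diagonal_add, det_diagonal]
  calc (1:ℝ) = ∏ _i : Fin d, 1 := by simp
    _ ≤ ∏ i : Fin d, (1 + (RCLike.ofReal ∘ hH.eigenvalues) i) := by
        refine Finset.prod_le_prod (fun i _ => zero_le_one) fun i _ => ?_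
        have := hD.eigenvalues_nonneg i
        simp only [Function.comp_apply, RCLike.ofReal_real_eq_id, id]
        linarith

open scoped MatrixOrder in
lemma det_mono_psd {d : ℕ} {A B : Matrix (Fin d) (Fin d) ℝ} (hA : A.PosDef)
    (hBA : (B - A).PosSemidef) : A.det ≤ B.det := by
  set C := B - A with hC
  have hB : B = A + C := by rw [hC]; abel
  set S := CFC.sqrt A with hSdef
  have hS : S * S = A := CFC.sqrt_mul_sqrt_self A hA.posSemidef.nonneg
  have hSps : S.PosSemidef := (CFC.sqrt_nonneg A).posSemidef
  have hdetS : IsUnit S.det := by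
    have h2 : S.det * S.det = A.det := by rw [← det_mul, hS]
    refine isUnit_iff_ne_zero.mpr fun h => ?_
    rw [h, mul_zero] at h2
    exact hA.det_pos.ne' h2.symm
  have hinv1 : S * S⁻¹ = 1 := mul_nonsing_inv _ hdetS
  have hinv2 : S⁻¹ * S = 1 := nonsing_inv_mul _ hdetS
  have hDps : (S⁻¹ * C * S⁻¹).PosSemidef := by
    have h1 : S⁻¹.IsHermitian := hSps.isHermitian.inv
    have := hBA.conjTranspose_mul_mul_same S⁻¹
    rwa [h1.eq] at this
  have key : B = S * (1 + S⁻¹ * C * S⁻¹) * S := by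
    rw [mul_add, add_mul, mul_one, hS]
    have : S * (S⁻¹ * C * S⁻¹) * S = C := by
      calc S * (S⁻¹ * C * S⁻¹) * S = (S * S⁻¹) * C * (S⁻¹ * S) := by
            simp only [Matrix.mul_assoc]
        _ = C := by rw [hinv1, hinv2, one_mul, mul_one]
    rw [this, ← hB]
  have hdet : B.det = A.det * (1 + S⁻¹ * C * S⁻¹).det := by
    rw [key, det_mul, det_mul, ← hS, det_mul]
    ring
  rw [hdet]
  nlinarith [det_one_add_psd hDps, hA.det_pos]



open scoped BigOperators

/-- Switching-cost bound: if each policy update episode `ks i` doubles the determinant of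
some per-step covariance matrix `Λ h (ks i)` compared to `Λ h (ks (i-1))`, and all
determinants stay between `λ̃^d` and `(λ̃ + K/d)^d`, then the number of updates `N`
is at most `(dH / log 2) · log(1 + K/(λ̃ d))`. -/
theorem switching_cost (d H K : ℕ) (hd : 0 < d) (hH : 0 < H) (hK : 0 < K)
    (lam : ℝ) (hlam : 0 < lam)
    (Λ : ℕ → ℕ → Matrix (Fin d) (Fin d) ℝ)
    (hpd : ∀ h ∈ Finset.Icc 1 H, ∀ k ∈ Finset.Icc 1 K, (Λ h k).PosDef)
    (hmono : ∀ h ∈ Finset.Icc 1 H, ∀ k₁ k₂ : ℕ, 1 ≤ k₁ → k₁ ≤ k₂ → k₂ ≤ K →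
      (Λ h k₂ - Λ h k₁).PosSemidef)
    (hdet_init : ∀ h ∈ Finset.Icc 1 H, lam ^ d ≤ (Λ h 1).det)
    (hdet_final : ∀ h ∈ Finset.Icc 1 H, (Λ h K).det ≤ (lam + (K : ℝ) / d) ^ d)
    (N : ℕ) (ks : ℕ → ℕ) (hks0 : ks 0 = 1)
    (hks_mono : ∀ i < N, ks i < ks (i + 1)) (hksN : ks N ≤ K)
    (hdouble : ∀ i ∈ Finset.Icc 1 N, ∃ h ∈ Finset.Icc 1 H,
      2 * (Λ h (ks (i - 1))).det < (Λ h (ks i)).det) :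
    (N : ℝ) ≤ ((d : ℝ) * H / Real.log 2) * Real.log (1 + (K : ℝ) / (lam * d)) := by
  classical
  have hchoice : ∀ i, ∃ h, i ∈ Finset.Icc 1 N →
      h ∈ Finset.Icc 1 H ∧ 2 * (Λ h (ks (i - 1))).det < (Λ h (ks i)).det := by
    intro i
    by_cases hi : i ∈ Finset.Icc 1 N
    · obtain ⟨h, hh, hlt⟩ := hdouble i hi
      exact ⟨h, fun _ => ⟨hh, hlt⟩⟩
    · exact ⟨1, fun h => absurd h hi⟩
  choose f hf using hchoice
  have ks_mono : ∀ j, j ≤ N → ∀ i, i ≤ j → ks i ≤ ks j := by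
    intro j
    induction j with
    | zero => intro _ i hi; simp [Nat.le_zero.mp hi]
    | succ j ih =>
      intro hjN i hij
      rcases Nat.eq_or_lt_of_le hij with rfl | hlt
      · exact le_rfl
      · exact le_trans (ih (by omega) i (by omega)) (le_of_lt (hks_mono j (by omega)))
  have hks1 : ∀ i, i ≤ N → 1 ≤ ks i := fun i hi => hks0 ▸ ks_mono i hi 0 (Nat.zero_le _)
  have hksK : ∀ i, i ≤ N → ks i ≤ K := fun i hi => le_trans (ks_mono N le_rfl i hi) hksN
  set X : ℝ := 1 + (K : ℝ) / (lam * d) with hX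
  have hdpos : (0:ℝ) < d := by exact_mod_cast hd
  have hX1 : (1:ℝ) ≤ X := by
    rw [hX]
    have : (0:ℝ) ≤ (K : ℝ) / (lam * d) := by positivity
    linarith
  -- chain lemma
  have chain : ∀ h ∈ Finset.Icc 1 H, ∀ i, i ≤ N →
      (2:ℝ) ^ (((Finset.Icc 1 i).filter (fun j => f j = h)).card) * lam ^ d
        ≤ (Λ h (ks i)).det := by
    intro h hh i
    induction i with
    | zero =>
      intro _
      simpa [hks0] using hdet_init h hh
    | succ i ih =>
      intro hiN
      have hi : i ≤ N := Nat.le_of_succ_le hiN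
      have hIH := ih hi
      have hsplit : Finset.Icc 1 (i+1) = insert (i+1) (Finset.Icc 1 i) := by
        ext x
        simp only [Finset.mem_Icc, Finset.mem_insert]
        omega
      by_cases hfi : f (i+1) = h
      · have hmem : (i+1) ∈ Finset.Icc 1 N := by simp; omega
        have hdd := (hf (i+1) hmem).2
        rw [hfi, Nat.add_sub_cancel] at hdd
        have hcard : ((Finset.Icc 1 (i+1)).filter (fun j => f j = h)).card
            = ((Finset.Icc 1 i).filter (fun j => f j = h)).card + 1 := by
          rw [hsplit, Finset.filter_insert, if_pos hfi,
            Finset.card_insert_of_notMem (by simp)]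
        rw [hcard, pow_succ]
        calc (2:ℝ) ^ ((Finset.Icc 1 i).filter (fun j => f j = h)).card * 2 * lam ^ d
            = 2 * ((2:ℝ) ^ ((Finset.Icc 1 i).filter (fun j => f j = h)).card * lam ^ d) := by
              ring
          _ ≤ 2 * (Λ h (ks i)).det := by linarith
          _ ≤ (Λ h (ks (i+1))).det := le_of_lt hdd
      · have hcard : ((Finset.Icc 1 (i+1)).filter (fun j => f j = h)).card
            = ((Finset.Icc 1 i).filter (fun j => f j = h)).card := by
          rw [hsplit, Finset.filter_insert, if_neg hfi]
        rw [hcard]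
        refine le_trans hIH (det_mono_psd (hpd h hh (ks i) ?_)
          (hmono h hh (ks i) (ks (i+1)) (hks1 i hi) (le_of_lt (hks_mono i hiN))
            (hksK (i+1) hiN)))
        simp only [Finset.mem_Icc]
        exact ⟨hks1 i hi, hksK i hi⟩
  have hlog2 : (0:ℝ) < Real.log 2 := Real.log_pos one_lt_two
  -- per-h bound
  have hbound : ∀ h ∈ Finset.Icc 1 H,
      ((((Finset.Icc 1 N).filter (fun j => f j = h)).card : ℝ))
        ≤ (d : ℝ) * Real.log X / Real.log 2 := by
    intro h hh
    set c := ((Finset.Icc 1 N).filter (fun j => f j = h)).card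
    have h1 := chain h hh N le_rfl
    have h2 : (Λ h (ks N)).det ≤ (Λ h K).det := by
      refine det_mono_psd (hpd h hh (ks N) ?_) (hmono h hh (ks N) K (hks1 N le_rfl) hksN le_rfl)
      simp only [Finset.mem_Icc]
      exact ⟨hks1 N le_rfl, hksN⟩
    have h3 := hdet_final h hh
    have hlamX : lam + (K:ℝ)/d = lam * X := by
      rw [hX]
      field_simp
    have h4 : (2:ℝ) ^ c * lam ^ d ≤ lam ^ d * X ^ d := by
      calc (2:ℝ) ^ c * lam ^ d ≤ (lam + (K:ℝ)/d) ^ d := le_trans h1 (le_trans h2 h3)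
        _ = lam ^ d * X ^ d := by rw [hlamX, mul_pow]
    have hlampow : (0:ℝ) < lam ^ d := by positivity
    have h5 : (2:ℝ) ^ c ≤ X ^ d := by
      have := le_of_mul_le_mul_right (by linarith [h4] : (2:ℝ)^c * lam^d ≤ X^d * lam^d) hlampow
      exact this
    have h6 : (c : ℝ) * Real.log 2 ≤ (d : ℝ) * Real.log X := by
      have := Real.log_le_log (by positivity) h5
      rwa [Real.log_pow, Real.log_pow] at this
    rw [le_div_iff₀ hlog2]
    exact h6
  have hcardsum : (Finset.Icc 1 N).card
      = ∑ h ∈ Finset.Icc 1 H, ((Finset.Icc 1 N).filter (fun j => f j = h)).card :=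
    Finset.card_eq_sum_card_fiberwise (fun i hi => (hf i hi).1)
  have hNcard : (Finset.Icc 1 N).card = N := by rw [Nat.card_Icc]; omega
  have hsum : (N : ℝ) = ∑ h ∈ Finset.Icc 1 H,
      (((Finset.Icc 1 N).filter (fun j => f j = h)).card : ℝ) := by
    rw [← Nat.cast_sum, ← hcardsum, hNcard]
  rw [hsum]
  calc (∑ h ∈ Finset.Icc 1 H, (((Finset.Icc 1 N).filter (fun j => f j = h)).card : ℝ))
      ≤ ∑ _h ∈ Finset.Icc 1 H, (d : ℝ) * Real.log X / Real.log 2 :=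
        Finset.sum_le_sum hbound
    _ = (H : ℝ) * ((d : ℝ) * Real.log X / Real.log 2) := by
        rw [Finset.sum_const, Nat.card_Icc]
        simp
    _ = ((d : ℝ) * H / Real.log 2) * Real.log X := by ring
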